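/- Let k be an integer, let h : ℝ → ℝ be twice differentiable with h(t) > 0 for all t, and let λ ∈ ℝ. Suppose that for all t ∈ ℝ: k·(h''(t) − h'(t)) = λ·h(t), and 3·h(t) − k·(h(t) − h'(t)) = −λ·h(t). Then k ≠ 0, 1 − 3/k ≥ 0, and there exist ε ∈ {1, −1} and a constant c₁ > 0 such that h(t) = c₁·exp(ε·√(1 − 3/k)·t) for all t ∈ ℝ and (λ + 3)/k = 1 − ε·√(1 − 3/k). -/

import Mathlib

/-- If k(h'' − h') = λ h and 3h − k(h − h') = −λ h for a positive twice
differentiable h, then k ≠ 0, 1 − 3/k ≥ 0, and h(t) = c₁ exp(ε √(1 − 3/k) t) with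
(λ + 3)/k = 1 − ε √(1 − 3/k) for some sign ε and constant c₁ > 0. -/
theorem superWarped_R12_ode_solution
    (k : ℤ) (h : ℝ → ℝ) (hpos : ∀ t : ℝ, 0 < h t)
    (hd1 : Differentiable ℝ h) (hd2 : Differentiable ℝ (deriv h))
    (lam : ℝ)
    (heq1 : ∀ t : ℝ, (k : ℝ) * (deriv (deriv h) t - deriv h t) = lam * h t)
    (heq2 : ∀ t : ℝ, 3 * h t - (k : ℝ) * (h t - deriv h t) = -lam * h t) :
    k ≠ 0 ∧ 1 - 3 / (k : ℝ) ≥ 0 ∧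
      ∃ ε : ℝ, (ε = 1 ∨ ε = -1) ∧ ∃ c₁ : ℝ, 0 < c₁ ∧
        (∀ t : ℝ, h t = c₁ * Real.exp (ε * Real.sqrt (1 - 3 / (k : ℝ)) * t)) ∧
        (lam + 3) / (k : ℝ) = 1 - ε * Real.sqrt (1 - 3 / (k : ℝ)) := by
  have hk : (k : ℝ) ≠ 0 := by
    intro hk0
    have h1 := heq1 0
    have h2 := heq2 0
    rw [hk0] at h1 h2
    have hp := hpos 0
    nlinarith
  have hkZ : k ≠ 0 := fun hh => hk (by simp [hh])
  set b : ℝ := ((k : ℝ) - lam - 3) / k with hb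
  have hkb : (k : ℝ) * b = (k : ℝ) - lam - 3 := by
    rw [hb]; field_simp
  -- first order ODE: h' = b h
  have hderiv : ∀ t, deriv h t = b * h t := by
    intro t
    have h2 := heq2 t
    have : (k : ℝ) * deriv h t = ((k : ℝ) - lam - 3) * h t := by linarith
    rw [← hkb] at this
    have := mul_left_cancel₀ hk (by linarith [this] : (k:ℝ) * deriv h t = (k:ℝ) * (b * h t))
    exact this
  -- h t = h 0 * exp (b t)
  have hconst : ∀ t : ℝ, h t * Real.exp (-b * t) = h 0 := by
    have hg : ∀ t : ℝ, HasDerivAt (fun s => h s * Real.exp (-b * s)) 0 t := by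
      intro t
      have h1 : HasDerivAt h (b * h t) t := by
        have := (hd1 t).hasDerivAt
        rwa [hderiv t] at this
      have h2 : HasDerivAt (fun s : ℝ => Real.exp (-b * s)) (Real.exp (-b * t) * (-b)) t := by
        have := ((hasDerivAt_id t).const_mul (-b)).exp
        simpa [mul_comm] using this
      have := h1.mul h2
      have e : (0:ℝ) = b * h t * Real.exp (-b * t) + h t * (Real.exp (-b * t) * -b) := by
        ring
      rw [e]
      exact this
    intro t
    have := is_const_of_deriv_eq_zero (f := fun s => h s * Real.exp (-b * s))
      (fun x => (hg x).differentiableAt) (fun x => (hg x).deriv) t 0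
    simpa using this
  have hsol : ∀ t : ℝ, h t = h 0 * Real.exp (b * t) := by
    intro t
    have hc := hconst t
    have := congrArg (· * Real.exp (b * t)) hc
    simpa [mul_assoc, ← Real.exp_add, neg_mul] using this
  -- second derivative
  have hderiv2 : ∀ t, deriv (deriv h) t = b * (b * h t) := by
    intro t
    have : deriv h = fun s => b * h s := funext hderiv
    rw [this, deriv_const_mul b (hd1 t), hderiv t]
  -- b² = 1 - 3/k
  have hb2 : b * b = 1 - 3 / (k : ℝ) := by
    have h1 := heq1 0
    rw [hderiv2 0, hderiv 0] at h1
    have hp := (hpos 0).ne'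
    have hkey : (k : ℝ) * (b * b) - (k : ℝ) * b = lam := by
      have : ((k : ℝ) * (b * b) - (k : ℝ) * b - lam) * h 0 = 0 := by linear_combination h1
      rcases mul_eq_zero.mp this with h' | h'
      · linarith
      · exact absurd h' hp
    have : (k : ℝ) * (b * b) = (k : ℝ) - 3 := by
      rw [hkb] at hkey; linarith
    field_simp
    linarith [this]
  have ha : 1 - 3 / (k : ℝ) ≥ 0 := by rw [← hb2]; exact mul_self_nonneg b
  refine ⟨hkZ, ha, if 0 ≤ b then 1 else -1, by split <;> simp, h 0, hpos 0, ?_, ?_⟩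
  · have hsq : Real.sqrt (1 - 3 / (k : ℝ)) = |b| := by
      rw [← hb2, ← abs_mul_self b, abs_mul, Real.sqrt_mul_self (abs_nonneg b)]
    have heb : (if 0 ≤ b then (1:ℝ) else -1) * Real.sqrt (1 - 3 / (k : ℝ)) = b := by
      rw [hsq]
      split <;> rename_i hbs
      · simp [abs_of_nonneg hbs]
      · simp [abs_of_neg (lt_of_not_ge hbs)]
    intro t
    rw [heb]
    exact hsol t
  · have hsq : Real.sqrt (1 - 3 / (k : ℝ)) = |b| := by
      rw [← hb2, ← abs_mul_self b, abs_mul, Real.sqrt_mul_self (abs_nonneg b)]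
    have heb : (if 0 ≤ b then (1:ℝ) else -1) * Real.sqrt (1 - 3 / (k : ℝ)) = b := by
      rw [hsq]
      split <;> rename_i hbs
      · simp [abs_of_nonneg hbs]
      · simp [abs_of_neg (lt_of_not_ge hbs)]
    rw [heb]
    field_simp
    linarith [hkb]
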